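/- arXiv:2309.08426 — 2 statements merged into one kernel-verified Lean document; each statement's English description precedes it below -/
import Mathlib

section
/- Let Δ be a traceless self-adjoint operator on m+n qubits and let Λ ⊆ [m+n] be a region of size m. Then ‖Δ‖_{W₁loc} ≥ ‖Tr_{Λᶜ}Δ‖_{W₁loc} + ‖Tr_Λ Δ‖_{W₁loc}, where the local quantum W₁ norms on the right-hand side are those of the subsystems of m and n qubits respectively (with the same penalty coefficients). In particular, for any states ρ, σ of m+n qubits, ‖ρ − σ‖_{W₁loc} ≥ ‖ρ_Λ − σ_Λ‖_{W₁loc} + ‖ρ_{Λᶜ} − σ_{Λᶜ}‖_{W₁loc}. -/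
open Matrix BigOperators
open scoped ComplexOrder

noncomputable section

namespace QW1

variable {ι : Type*} [Fintype ι] [DecidableEq ι]

/-- The space of (not necessarily Hermitian) operators on a system of qubits labelled by `ι`:
matrices indexed by the computational basis `ι → Fin 2`. -/
abbrev QMat (ι : Type*) [Fintype ι] [DecidableEq ι] :=
  Matrix (ι → Fin 2) (ι → Fin 2) ℂ

/-- The operator norm (largest singular value) of a matrix. -/
noncomputable def opNorm {d : Type*} [Fintype d] [DecidableEq d] (A : Matrix d d ℂ) : ℝ :=
  ⨆ i, Real.sqrt ((Matrix.isHermitian_conjTranspose_mul_self A).eigenvalues i)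

/-- The trace norm (sum of singular values) of a matrix. -/
noncomputable def traceNorm {d : Type*} [Fintype d] [DecidableEq d] (A : Matrix d d ℂ) : ℝ :=
  ∑ i, Real.sqrt ((Matrix.isHermitian_conjTranspose_mul_self A).eigenvalues i)

/-- Combine an assignment of basis states on `Λ` and on its complement into one on all of `ι`. -/
def merge (Λ : Finset ι) (f : {x // x ∈ Λ} → Fin 2) (g : {x // x ∉ Λ} → Fin 2) (x : ι) :
    Fin 2 :=
  if h : x ∈ Λ then f ⟨x, h⟩ else g ⟨x, h⟩

/-- The partial trace over the qubits outside `Λ`, `Tr_{Λᶜ}`, yielding an operator on the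
qubits in `Λ`. -/
noncomputable def ptrace (Λ : Finset ι) (A : QMat ι) :
    Matrix ({x // x ∈ Λ} → Fin 2) ({x // x ∈ Λ} → Fin 2) ℂ :=
  fun f g => ∑ h : {x : ι // x ∉ Λ} → Fin 2, A (merge Λ f h) (merge Λ g h)

/-- The extension `M ⊗ I_{Λᶜ}` of an operator `M` on the qubits in `Λ` to all the qubits. -/
def embed (Λ : Finset ι)
    (M : Matrix ({x // x ∈ Λ} → Fin 2) ({x // x ∈ Λ} → Fin 2) ℂ) : QMat ι :=
  fun f g =>
    (if ∀ x : ι, x ∉ Λ → f x = g x then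
      M (fun x => f x.1) (fun x => g x.1) else 0)

/-- `H` acts on (at most) the qubits in `Λ`: it has the form `H_Λ ⊗ I_{Λᶜ}` with `H_Λ`
self-adjoint. -/
def ActsOn (Λ : Finset ι) (H : QMat ι) : Prop :=
  ∃ M, M.IsHermitian ∧ H = embed Λ M

/-- The local quantum norm with penalty coefficients `c`. -/
noncomputable def localNorm (c : ℕ → ℝ) (H : QMat ι) : ℝ :=
  sInf { r : ℝ | ∃ F : Finset ι → QMat ι, (∀ Λ, ActsOn Λ (F Λ)) ∧ H = ∑ Λ, F Λ ∧
    r = 2 * ⨆ x : ι, ∑ Λ ∈ Finset.univ.filter (fun Λ : Finset ι => x ∈ Λ),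
      c Λ.card * opNorm (F Λ) }

/-- The local quantum `W₁` norm: the dual of the local quantum norm. -/
noncomputable def W1loc (c : ℕ → ℝ) (Δ : QMat ι) : ℝ :=
  sSup { r : ℝ | ∃ H : QMat ι, H.IsHermitian ∧ localNorm c H ≤ 1 ∧ r = ((Δ * H).trace).re }

/-- The quantum `W₁` norm of De Palma et al. -/
noncomputable def W1 (Δ : QMat ι) : ℝ :=
  sInf { r : ℝ | ∃ D : ι → QMat ι,
    (∀ x, (D x).IsHermitian ∧ (D x).trace = 0 ∧ ptrace ({x}ᶜ : Finset ι) (D x) = 0) ∧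
    Δ = ∑ x, D x ∧ r = (1 / 2) * ∑ x, traceNorm (D x) }

/-- Tensor product of operators on two disjoint families of qubits. -/
def tensor {κ : Type*} [Fintype κ] [DecidableEq κ] (A : QMat ι) (B : QMat κ) :
    QMat (ι ⊕ κ) :=
  fun f g => A (f ∘ Sum.inl) (g ∘ Sum.inl) * B (f ∘ Sum.inr) (g ∘ Sum.inr)

/-- Tensor product of single-qubit operators, one for each qubit. -/
def tensorAll (B : ι → Matrix (Fin 2) (Fin 2) ℂ) : QMat ι :=
  fun f g => ∏ j, B j (f j) (g j)

/-- The four Pauli matrices `I, X, Y, Z`. -/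
noncomputable def pauli : Fin 4 → Matrix (Fin 2) (Fin 2) ℂ :=
  ![1, !![0, 1; 1, 0], !![0, -Complex.I; Complex.I, 0], !![1, 0; 0, -1]]

/-- The Pauli operator `σ_{a 1} ⊗ ⋯ ⊗ σ_{a n}`. -/
noncomputable def pauliOp (a : ι → Fin 4) : QMat ι :=
  tensorAll fun j => pauli (a j)

/-- The weight (locality) of a Pauli operator: the number of non-identity factors. -/
def weight (a : ι → Fin 4) : ℕ :=
  (Finset.univ.filter fun j => a j ≠ 0).card

/-- A quantum state: a positive semidefinite matrix of unit trace. (`PosSemidef` is taken with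
respect to the complex order.) -/
def IsState (ρ : QMat ι) : Prop :=
  ρ.PosSemidef ∧ ρ.trace = 1

end QW1

namespace QW1

variable {ι : Type*} [Fintype ι] [DecidableEq ι]

/-- The dependence `∂_x H` of the observable `H` on the qubit `x`. -/
noncomputable def dep (x : ι) (H : QMat ι) : ℝ :=
  2 * sInf { r : ℝ | ∃ K : QMat ι, ActsOn ({x}ᶜ : Finset ι) K ∧ r = opNorm (H - K) }

/-- The quantum Lipschitz constant `‖H‖_L = max_x ∂_x H`. -/
noncomputable def lipNorm (H : QMat ι) : ℝ :=
  ⨆ x : ι, dep x H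

/-- Single-qubit unitaries rotating the eigenbases of the Paulis `Z`, `X`, `Y`
to the computational basis. -/
noncomputable def ubasis : Fin 3 → Matrix (Fin 2) (Fin 2) ℂ :=
  ![1,
    (Real.sqrt 2 : ℂ)⁻¹ • !![1, 1; 1, -1],
    (Real.sqrt 2 : ℂ)⁻¹ • !![1, -Complex.I; 1, Complex.I]]

/-- The single-qubit classical shadow `3 U† |b⟩⟨b| U − I`. -/
noncomputable def shadow1 (w : Fin 3) (b : Fin 2) : Matrix (Fin 2) (Fin 2) ℂ :=
  (3 : ℂ) • ((ubasis w)ᴴ * Matrix.single b b 1 * ubasis w) - 1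

/-- The classical shadow `⊗_j (3 U_j† |b_j⟩⟨b_j| U_j − I)` of the Pauli measurement
primitive associated with the sampled basis choices and outcomes `s`. -/
noncomputable def shadowOf (s : ι → Fin 3 × Fin 2) : QMat ι :=
  tensorAll fun j => shadow1 (s j).1 (s j).2

/-- The probability of the sample `s` (a uniformly random Pauli basis measured on each qubit,
with outcomes distributed with the Born probability `⟨b|UρU†|b⟩`) when measuring one copy
of `ρ` in the Pauli measurement primitive. -/
noncomputable def shadowPMF (ρ : QMat ι) (s : ι → Fin 3 × Fin 2) : ℝ :=
  ((3 : ℝ) ^ Fintype.card ι)⁻¹ *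
    (((tensorAll fun j => ubasis (s j).1) * ρ * (tensorAll fun j => ubasis (s j).1)ᴴ)
      (fun j => (s j).2) (fun j => (s j).2)).re

open Classical in
/-- The probability that `N` independent classical shadows of `ρ` (from the Pauli
measurement primitive) satisfy the event `E`. -/
noncomputable def shadowProb (ρ : QMat ι) (N : ℕ)
    (E : (Fin N → ι → Fin 3 × Fin 2) → Prop) : ℝ :=
  ∑ ω : Fin N → ι → Fin 3 × Fin 2, if E ω then ∏ i, shadowPMF ρ (ω i) else 0

/-- Extension of a single-qubit operator `K` on the qubit `i`, acting as the identity on the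
remaining qubits. -/
noncomputable def oneSite (i : ι) (K : Matrix (Fin 2) (Fin 2) ℂ) : QMat ι :=
  tensorAll fun j => if j = i then K else 1

/-- Logarithm of a Hermitian matrix via its spectral decomposition (junk value otherwise). -/
noncomputable def mlog {d : Type*} [Fintype d] [DecidableEq d] (A : Matrix d d ℂ) :
    Matrix d d ℂ :=
  if hA : A.IsHermitian then
    (hA.eigenvectorUnitary : Matrix d d ℂ) *
      Matrix.diagonal (fun i => (Real.log (hA.eigenvalues i) : ℂ)) *
      star (hA.eigenvectorUnitary : Matrix d d ℂ)
  else 0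

/-- The quantum relative entropy `S(ρ‖σ) = Tr[ρ(ln ρ − ln σ)]`. -/
noncomputable def relEnt (ρ σ : QMat ι) : ℝ :=
  ((ρ * (mlog ρ - mlog σ)).trace).re

/-- The Gibbs state `e^{−H} / Tr e^{−H}`. -/
noncomputable def gibbs (H : QMat ι) : QMat ι :=
  ((NormedSpace.exp (-H)).trace)⁻¹ • NormedSpace.exp (-H)

end QW1

open QW1 Matrix Complex
namespace QW1Aux

open QW1 Matrix Complex

variable {d : Type*} [Fintype d] [DecidableEq d]

lemma opNorm_nonneg (A : Matrix d d ℂ) : 0 ≤ opNorm A :=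
  Real.iSup_nonneg fun _ => Real.sqrt_nonneg _

lemma eig_le_sq_opNorm (A : Matrix d d ℂ) (i : d) :
    (Matrix.isHermitian_conjTranspose_mul_self A).eigenvalues i ≤ opNorm A ^ 2 := by
  have h0 := Matrix.eigenvalues_conjTranspose_mul_self_nonneg A i
  have h1 : Real.sqrt ((Matrix.isHermitian_conjTranspose_mul_self A).eigenvalues i) ≤ opNorm A := by
    refine le_ciSup (f := fun i => Real.sqrt ((Matrix.isHermitian_conjTranspose_mul_self A).eigenvalues i)) ?_ i
    exact Set.Finite.bddAbove (Set.finite_range _)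
  calc (Matrix.isHermitian_conjTranspose_mul_self A).eigenvalues i
      = Real.sqrt ((Matrix.isHermitian_conjTranspose_mul_self A).eigenvalues i) ^ 2 := by
        rw [Real.sq_sqrt h0]
    _ ≤ opNorm A ^ 2 := by
        have := opNorm_nonneg A
        nlinarith [Real.sqrt_nonneg ((Matrix.isHermitian_conjTranspose_mul_self A).eigenvalues i)]

/-- quadratic form of a Hermitian matrix, bounded by sup of eigenvalues -/
lemma qf_le_of_eig_le {Q : Matrix d d ℂ} (hQ : Q.IsHermitian) {t : ℝ}
    (ht : ∀ i, hQ.eigenvalues i ≤ t) (ht0 : 0 ≤ t) (v : d → ℂ) :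
    (dotProduct (star v) (Q *ᵥ v)).re ≤ t * (dotProduct (star v) v).re := by
  classical
  set U : Matrix d d ℂ := (hQ.eigenvectorUnitary : Matrix d d ℂ) with hU
  have hUU : U * star U = 1 := (Matrix.mem_unitaryGroup_iff).mp (hQ.eigenvectorUnitary).2
  set u : d → ℂ := (star U) *ᵥ v with hu
  have hstaru : star u = star v ᵥ* U := by
    rw [hu, Matrix.star_mulVec, Matrix.star_eq_conjTranspose, Matrix.conjTranspose_conjTranspose]
  have hqf : dotProduct (star v) (Q *ᵥ v)
      = dotProduct (star u) ((Matrix.diagonal (RCLike.ofReal ∘ hQ.eigenvalues)) *ᵥ u) := by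
    conv_lhs => rw [hQ.spectral_theorem, Unitary.conjStarAlgAut_apply]
    rw [← Matrix.mulVec_mulVec, ← Matrix.mulVec_mulVec, dotProduct_mulVec (star v), ← hstaru, hu]
  have hnorm : dotProduct (star u) u = dotProduct (star v) v := by
    rw [hstaru, hu, ← dotProduct_mulVec, Matrix.mulVec_mulVec, hUU, Matrix.one_mulVec]
  have hdiag : ∀ i, ((Matrix.diagonal (RCLike.ofReal ∘ hQ.eigenvalues)) *ᵥ u) i
      = (hQ.eigenvalues i : ℂ) * u i := by
    intro i
    simp [Matrix.mulVec_diagonal]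
  rw [hqf]
  have hre : (dotProduct (star u) ((Matrix.diagonal (RCLike.ofReal ∘ hQ.eigenvalues)) *ᵥ u)).re
      = ∑ i, hQ.eigenvalues i * Complex.normSq (u i) := by
    rw [dotProduct]
    rw [Complex.re_sum]
    refine Finset.sum_congr rfl fun i _ => ?_
    rw [hdiag i]
    simp only [Pi.star_apply]
    have : (starRingEnd ℂ) (u i) * ((hQ.eigenvalues i : ℂ) * u i)
        = (hQ.eigenvalues i : ℂ) * ((starRingEnd ℂ) (u i) * u i) := by ring
    rw [RCLike.star_def, this]
    rw [mul_comm ((starRingEnd ℂ) (u i)) (u i), Complex.mul_conj]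
    simp
  have hre2 : (dotProduct (star u) u).re = ∑ i, Complex.normSq (u i) := by
    rw [dotProduct, Complex.re_sum]
    refine Finset.sum_congr rfl fun i _ => ?_
    simp only [Pi.star_apply]
    rw [RCLike.star_def, mul_comm, Complex.mul_conj]
    simp
  rw [hre, ← hnorm, hre2, Finset.mul_sum]
  refine Finset.sum_le_sum fun i _ => ?_
  exact mul_le_mul_of_nonneg_right (ht i) (Complex.normSq_nonneg _)

lemma qf_le_opNorm_sq (A : Matrix d d ℂ) (v : d → ℂ) :
    (dotProduct (star v) ((Aᴴ * A) *ᵥ v)).re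
      ≤ opNorm A ^ 2 * (dotProduct (star v) v).re :=
  qf_le_of_eig_le (Matrix.isHermitian_conjTranspose_mul_self A) (eig_le_sq_opNorm A)
    (by positivity) v

lemma opNorm_le_of_qf {A : Matrix d d ℂ} {t : ℝ} (ht : 0 ≤ t)
    (h : ∀ v : d → ℂ, (dotProduct (star v) ((Aᴴ * A) *ᵥ v)).re
      ≤ t * (dotProduct (star v) v).re) :
    opNorm A ≤ Real.sqrt t := by
  refine Real.iSup_le (fun i => ?_) (Real.sqrt_nonneg t)
  refine Real.sqrt_le_sqrt ?_
  set hQ := Matrix.isHermitian_conjTranspose_mul_self A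
  have heig := hQ.eigenvalues_eq i
  have hb : ((starRingEnd ℂ) ∘ ⇑(hQ.eigenvectorBasis i)) = star ⇑(hQ.eigenvectorBasis i) := rfl
  have hnorm1 : (dotProduct (star ⇑(hQ.eigenvectorBasis i)) ⇑(hQ.eigenvectorBasis i)) = 1 := by
    have h1 : ‖hQ.eigenvectorBasis i‖ = 1 := hQ.eigenvectorBasis.orthonormal.1 i
    have h2 := EuclideanSpace.inner_eq_star_dotProduct (𝕜 := ℂ)
      (hQ.eigenvectorBasis i) (hQ.eigenvectorBasis i)
    rw [inner_self_eq_norm_sq_to_K, h1] at h2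
    rw [dotProduct_comm]
    simpa using h2.symm
  have := h (⇑(hQ.eigenvectorBasis i))
  rw [hnorm1] at this
  simp only [Complex.one_re, mul_one] at this
  rw [heig]
  simpa using this

lemma opNorm_zero : opNorm (0 : Matrix d d ℂ) = 0 := by
  refine le_antisymm ?_ (opNorm_nonneg _)
  have := opNorm_le_of_qf (A := (0 : Matrix d d ℂ)) (t := 0) le_rfl ?_
  · simpa using this
  · intro v; simp [Matrix.mulVec_zero]

lemma entry_le_opNorm (A : Matrix d d ℂ) (i j : d) :
    ‖A i j‖ ≤ opNorm A := by
  classical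
  set v : d → ℂ := Pi.single j 1 with hv
  have hqf := qf_le_opNorm_sq A v
  have h1 : dotProduct (star v) ((Aᴴ * A) *ᵥ v) = (Aᴴ * A) j j := by
    rw [hv]
    simp [dotProduct, Matrix.mulVec, Pi.single_apply, Finset.sum_ite_eq',
      apply_ite, star_one, star_zero, mul_comm]
  have h2 : dotProduct (star v) v = 1 := by
    rw [hv]
    simp [dotProduct, Pi.single_apply, apply_ite, Finset.sum_ite_eq']
  have h3 : ((Aᴴ * A) j j).re = ∑ k, Complex.normSq (A k j) := by
    rw [Matrix.mul_apply, Complex.re_sum]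
    refine Finset.sum_congr rfl fun k _ => ?_
    rw [Matrix.conjTranspose_apply, mul_comm, RCLike.star_def, Complex.mul_conj]
    simp
  rw [h1, h2] at hqf
  simp only [Complex.one_re, mul_one] at hqf
  rw [h3] at hqf
  have h4 : Complex.normSq (A i j) ≤ opNorm A ^ 2 := by
    refine le_trans ?_ hqf
    exact Finset.single_le_sum (f := fun k => Complex.normSq (A k j))
      (fun k _ => Complex.normSq_nonneg _) (Finset.mem_univ i)
  have h5 : ‖A i j‖ ^ 2 ≤ opNorm A ^ 2 := by
    rwa [Complex.sq_norm]
  nlinarith [norm_nonneg (A i j), opNorm_nonneg A]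

end QW1Aux
namespace QW1Aux

open QW1 Matrix Complex

variable {ι : Type*} [Fintype ι] [DecidableEq ι]

lemma merge_mem (Λ : Finset ι) (f : {x // x ∈ Λ} → Fin 2) (g : {x // x ∉ Λ} → Fin 2)
    {x : ι} (h : x ∈ Λ) : merge Λ f g x = f ⟨x, h⟩ := dif_pos h

lemma merge_not_mem (Λ : Finset ι) (f : {x // x ∈ Λ} → Fin 2) (g : {x // x ∉ Λ} → Fin 2)
    {x : ι} (h : x ∉ Λ) : merge Λ f g x = g ⟨x, h⟩ := dif_neg h

/-- Equivalence between configurations on `Λ`, `Λᶜ` and global configurations. -/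
def mergeEquiv (Λ : Finset ι) :
    (({x // x ∈ Λ} → Fin 2) × ({x // x ∉ Λ} → Fin 2)) ≃ (ι → Fin 2) where
  toFun p := merge Λ p.1 p.2
  invFun f := (fun x => f x.1, fun x => f x.1)
  left_inv p := by
    refine Prod.ext (funext fun x => ?_) (funext fun x => ?_)
    · simp [merge_mem Λ p.1 p.2 x.2]
    · simp [merge_not_mem Λ p.1 p.2 x.2]
  right_inv f := by
    funext x
    by_cases h : x ∈ Λ
    · simp [merge_mem _ _ _ h]
    · simp [merge_not_mem _ _ _ h]

lemma restrict_merge (Λ : Finset ι) (f₁ : {x // x ∈ Λ} → Fin 2) (f₂ : {x // x ∉ Λ} → Fin 2) :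
    (fun (x : {x // x ∈ Λ}) => merge Λ f₁ f₂ x.1) = f₁ := by
  funext x; simp [merge_mem Λ f₁ f₂ x.2]

lemma merge_off_iff (Λ : Finset ι) (f₁ g₁ : {x // x ∈ Λ} → Fin 2)
    (f₂ g₂ : {x // x ∉ Λ} → Fin 2) :
    (∀ x : ι, x ∉ Λ → merge Λ f₁ f₂ x = merge Λ g₁ g₂ x) ↔ f₂ = g₂ := by
  constructor
  · intro h
    funext x
    have := h x.1 x.2
    rwa [merge_not_mem _ _ _ x.2, merge_not_mem _ _ _ x.2] at this
  · rintro rfl x hx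
    rw [merge_not_mem _ _ _ hx, merge_not_mem _ _ _ hx]

/-- restriction of a global vector to `Λ` given a fixed configuration outside. -/
def slice (Λ : Finset ι) (h : {x // x ∉ Λ} → Fin 2) (v : (ι → Fin 2) → ℂ) :
    ({x // x ∈ Λ} → Fin 2) → ℂ :=
  fun f₁ => v (merge Λ f₁ h)

lemma embed_apply_merge (Λ : Finset ι)
    (M : Matrix ({x // x ∈ Λ} → Fin 2) ({x // x ∈ Λ} → Fin 2) ℂ)
    (f₁ g₁ : {x // x ∈ Λ} → Fin 2) (f₂ g₂ : {x // x ∉ Λ} → Fin 2) :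
    embed Λ M (merge Λ f₁ f₂) (merge Λ g₁ g₂) = if f₂ = g₂ then M f₁ g₁ else 0 := by
  unfold embed
  by_cases h : f₂ = g₂
  · rw [if_pos ((merge_off_iff Λ f₁ g₁ f₂ g₂).2 h), if_pos h, restrict_merge, restrict_merge]
  · rw [if_neg (fun hc => h ((merge_off_iff Λ f₁ g₁ f₂ g₂).1 hc)), if_neg h]

lemma embed_conjTranspose (Λ : Finset ι)
    (M : Matrix ({x // x ∈ Λ} → Fin 2) ({x // x ∈ Λ} → Fin 2) ℂ) :
    (embed Λ M)ᴴ = embed Λ Mᴴ := by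
  ext f g
  simp only [Matrix.conjTranspose_apply, embed]
  by_cases h : ∀ x : ι, x ∉ Λ → f x = g x
  · rw [if_pos (fun x hx => (h x hx).symm), if_pos h]
  · rw [if_neg (fun hc => h (fun x hx => (hc x hx).symm)), if_neg h, star_zero]

lemma embed_isHermitian (Λ : Finset ι)
    {M : Matrix ({x // x ∈ Λ} → Fin 2) ({x // x ∈ Λ} → Fin 2) ℂ} (hM : M.IsHermitian) :
    (embed Λ M).IsHermitian := by
  unfold Matrix.IsHermitian
  rw [embed_conjTranspose, hM.eq]

lemma embed_zero (Λ : Finset ι) : embed Λ (0 : Matrix _ _ ℂ) = (0 : QMat ι) := by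
  ext f g; simp [embed]

lemma embed_add (Λ : Finset ι) (M N : Matrix ({x // x ∈ Λ} → Fin 2) ({x // x ∈ Λ} → Fin 2) ℂ) :
    embed Λ (M + N) = embed Λ M + embed Λ N := by
  ext f g
  simp only [embed, Matrix.add_apply]
  split <;> simp

/-- `embed` as an additive monoid hom. -/
def embedHom (Λ : Finset ι) :
    Matrix ({x // x ∈ Λ} → Fin 2) ({x // x ∈ Λ} → Fin 2) ℂ →+ QMat ι where
  toFun := embed Λ
  map_zero' := embed_zero Λ
  map_add' := embed_add Λ

lemma embed_sum (Λ : Finset ι) {α : Type*} (s : Finset α)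
    (f : α → Matrix ({x // x ∈ Λ} → Fin 2) ({x // x ∈ Λ} → Fin 2) ℂ) :
    embed Λ (∑ a ∈ s, f a) = ∑ a ∈ s, embed Λ (f a) :=
  map_sum (embedHom Λ) f s

lemma mulVec_embed (Λ : Finset ι)
    (M : Matrix ({x // x ∈ Λ} → Fin 2) ({x // x ∈ Λ} → Fin 2) ℂ)
    (v : (ι → Fin 2) → ℂ) (f₁ : {x // x ∈ Λ} → Fin 2) (f₂ : {x // x ∉ Λ} → Fin 2) :
    (embed Λ M *ᵥ v) (merge Λ f₁ f₂) = (M *ᵥ slice Λ f₂ v) f₁ := by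
  rw [Matrix.mulVec, dotProduct]
  rw [← Equiv.sum_comp (mergeEquiv Λ) (fun g => embed Λ M (merge Λ f₁ f₂) g * v g)]
  rw [Fintype.sum_prod_type]
  have : ∀ (g₁ : {x // x ∈ Λ} → Fin 2) (g₂ : {x // x ∉ Λ} → Fin 2),
      embed Λ M (merge Λ f₁ f₂) (mergeEquiv Λ (g₁, g₂)) * v (mergeEquiv Λ (g₁, g₂))
      = if f₂ = g₂ then M f₁ g₁ * v (merge Λ g₁ f₂) else 0 := by
    intro g₁ g₂
    show embed Λ M (merge Λ f₁ f₂) (merge Λ g₁ g₂) * v (merge Λ g₁ g₂) = _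
    rw [embed_apply_merge]
    by_cases h : f₂ = g₂
    · subst h; simp
    · simp [h]
  simp only [this]
  simp [Matrix.mulVec, dotProduct, slice]

lemma sum_merge {β : Type*} [AddCommMonoid β] (Λ : Finset ι) (F : (ι → Fin 2) → β) :
    ∑ f, F f = ∑ f₂ : {x // x ∉ Λ} → Fin 2, ∑ f₁ : {x // x ∈ Λ} → Fin 2,
      F (merge Λ f₁ f₂) := by
  rw [← Equiv.sum_comp (mergeEquiv Λ) F, Fintype.sum_prod_type]
  exact Finset.sum_comm

lemma nsq_eq (d : Type*) [Fintype d] (w : d → ℂ) :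
    (dotProduct (star w) w).re = ∑ i, Complex.normSq (w i) := by
  rw [dotProduct, Complex.re_sum]
  refine Finset.sum_congr rfl fun i _ => ?_
  simp only [Pi.star_apply]
  rw [RCLike.star_def, mul_comm, Complex.mul_conj]
  simp

lemma qf_transpose_mul_self {d : Type*} [Fintype d] [DecidableEq d]
    (A : Matrix d d ℂ) (v : d → ℂ) :
    dotProduct (star v) ((Aᴴ * A) *ᵥ v)
      = dotProduct (star (A *ᵥ v)) (A *ᵥ v) := by
  rw [← Matrix.mulVec_mulVec, dotProduct_mulVec, ← Matrix.star_mulVec]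

lemma opNorm_embed_le (Λ : Finset ι)
    (M : Matrix ({x // x ∈ Λ} → Fin 2) ({x // x ∈ Λ} → Fin 2) ℂ) :
    opNorm (embed Λ M) ≤ opNorm M := by
  have key : ∀ v : (ι → Fin 2) → ℂ,
      (dotProduct (star v) (((embed Λ M)ᴴ * embed Λ M) *ᵥ v)).re
        ≤ opNorm M ^ 2 * (dotProduct (star v) v).re := by
    intro v
    rw [qf_transpose_mul_self, nsq_eq, nsq_eq, sum_merge Λ (fun f => Complex.normSq (v f)),
      sum_merge Λ (fun f => Complex.normSq ((embed Λ M *ᵥ v) f)), Finset.mul_sum]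
    refine Finset.sum_le_sum fun f₂ _ => ?_
    have h1 : ∑ f₁ : {x // x ∈ Λ} → Fin 2, Complex.normSq ((embed Λ M *ᵥ v) (merge Λ f₁ f₂))
        = (dotProduct (star ((M *ᵥ slice Λ f₂ v))) ((M *ᵥ slice Λ f₂ v))).re := by
      rw [nsq_eq]
      exact Finset.sum_congr rfl fun f₁ _ => by rw [mulVec_embed]
    rw [h1, ← qf_transpose_mul_self]
    have h2 := qf_le_opNorm_sq M (slice Λ f₂ v)
    refine h2.trans (le_of_eq ?_)
    congr 1
    rw [nsq_eq]
    rfl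
  have := opNorm_le_of_qf (A := embed Λ M) (t := opNorm M ^ 2) (by positivity) key
  rwa [Real.sqrt_sq (opNorm_nonneg M)] at this

lemma trace_mul_embed (Λ : Finset ι) (Δ : QMat ι)
    (M : Matrix ({x // x ∈ Λ} → Fin 2) ({x // x ∈ Λ} → Fin 2) ℂ) :
    (Δ * embed Λ M).trace = (ptrace Λ Δ * M).trace := by
  rw [Matrix.trace, Matrix.trace]
  simp only [Matrix.diag_apply, Matrix.mul_apply]
  rw [sum_merge Λ (fun f => ∑ g, Δ f g * embed Λ M g f)]
  have step : ∀ (f₁ : {x // x ∈ Λ} → Fin 2) (f₂ : {x // x ∉ Λ} → Fin 2),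
      ∑ g, Δ (merge Λ f₁ f₂) g * embed Λ M g (merge Λ f₁ f₂)
        = ∑ g₁ : {x // x ∈ Λ} → Fin 2, Δ (merge Λ f₁ f₂) (merge Λ g₁ f₂) * M g₁ f₁ := by
    intro f₁ f₂
    rw [← Equiv.sum_comp (mergeEquiv Λ)
      (fun g => Δ (merge Λ f₁ f₂) g * embed Λ M g (merge Λ f₁ f₂)), Fintype.sum_prod_type]
    have : ∀ (g₁ : {x // x ∈ Λ} → Fin 2) (g₂ : {x // x ∉ Λ} → Fin 2),
        Δ (merge Λ f₁ f₂) (mergeEquiv Λ (g₁, g₂)) * embed Λ M (mergeEquiv Λ (g₁, g₂)) (merge Λ f₁ f₂)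
        = if g₂ = f₂ then Δ (merge Λ f₁ f₂) (merge Λ g₁ f₂) * M g₁ f₁ else 0 := by
      intro g₁ g₂
      show Δ (merge Λ f₁ f₂) (merge Λ g₁ g₂) * embed Λ M (merge Λ g₁ g₂) (merge Λ f₁ f₂) = _
      rw [embed_apply_merge]
      by_cases h : g₂ = f₂
      · subst h; simp
      · simp [h]
    simp only [this]
    exact Finset.sum_congr rfl fun g₁ _ => by rw [Finset.sum_ite_eq' Finset.univ f₂ _]; simp
  calc ∑ f₂ : {x // x ∉ Λ} → Fin 2, ∑ f₁ : {x // x ∈ Λ} → Fin 2,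
        ∑ g, Δ (merge Λ f₁ f₂) g * embed Λ M g (merge Λ f₁ f₂)
      = ∑ f₂ : {x // x ∉ Λ} → Fin 2, ∑ f₁ : {x // x ∈ Λ} → Fin 2,
          ∑ g₁ : {x // x ∈ Λ} → Fin 2, Δ (merge Λ f₁ f₂) (merge Λ g₁ f₂) * M g₁ f₁ := by
        exact Finset.sum_congr rfl fun f₂ _ => Finset.sum_congr rfl fun f₁ _ => step f₁ f₂
    _ = ∑ f₁ : {x // x ∈ Λ} → Fin 2, ∑ g₁ : {x // x ∈ Λ} → Fin 2,
          (∑ f₂ : {x // x ∉ Λ} → Fin 2, Δ (merge Λ f₁ f₂) (merge Λ g₁ f₂)) * M g₁ f₁ := by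
        rw [Finset.sum_comm]
        refine Finset.sum_congr rfl fun f₁ _ => ?_
        rw [Finset.sum_comm]
        refine Finset.sum_congr rfl fun g₁ _ => ?_
        rw [Finset.sum_mul]
    _ = ∑ f₁, ∑ g₁, ptrace Λ Δ f₁ g₁ * M g₁ f₁ := rfl

lemma ptrace_trace (Λ : Finset ι) (A : QMat ι) : (ptrace Λ A).trace = A.trace := by
  rw [Matrix.trace, Matrix.trace]
  simp only [Matrix.diag_apply, ptrace]
  rw [sum_merge Λ (fun f => A f f), Finset.sum_comm]

lemma ptrace_sub (Λ : Finset ι) (A B : QMat ι) :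
    ptrace Λ (A - B) = ptrace Λ A - ptrace Λ B := by
  ext f g
  simp [ptrace, Finset.sum_sub_distrib]

lemma trace_mul_embed_empty (Δ : QMat ι) (hΔtr : Δ.trace = 0)
    (M : Matrix ({x // x ∈ (∅ : Finset ι)} → Fin 2) ({x // x ∈ (∅ : Finset ι)} → Fin 2) ℂ) :
    (Δ * embed (∅ : Finset ι) M).trace = 0 := by
  set z : {x // x ∈ (∅ : Finset ι)} → Fin 2 :=
    fun x => absurd x.2 (Finset.notMem_empty x.1)
  have hz : ∀ w : {x // x ∈ (∅ : Finset ι)} → Fin 2, w = z := by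
    intro w; funext x; exact absurd x.2 (Finset.notMem_empty x.1)
  have hemb : embed (∅ : Finset ι) M = M z z • (1 : QMat ι) := by
    ext f g
    simp only [embed, Matrix.smul_apply, Matrix.one_apply]
    by_cases h : f = g
    · subst h
      rw [if_pos (fun x _ => rfl), if_pos rfl, ← hz (fun x => f x.1)]
      simp
    · rw [if_neg, if_neg h, smul_zero]
      intro hc
      exact h (funext fun x => hc x (Finset.notMem_empty x))
  rw [hemb, Matrix.mul_smul, Matrix.mul_one, Matrix.trace_smul, hΔtr, smul_zero]

lemma actsOn_zero (Λ : Finset ι) : ActsOn Λ (0 : QMat ι) :=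
  ⟨0, Matrix.isHermitian_zero, (embed_zero Λ).symm⟩

lemma actsOn_univ {H : QMat ι} (hH : H.IsHermitian) : ActsOn (Finset.univ : Finset ι) H := by
  refine ⟨fun f g => H (fun x => f ⟨x, Finset.mem_univ x⟩) (fun x => g ⟨x, Finset.mem_univ x⟩),
    ?_, ?_⟩
  · unfold Matrix.IsHermitian
    ext f g
    show star _ = _
    exact (hH.apply _ _)
  · ext f g
    simp only [embed]
    rw [if_pos (fun x hx => absurd (Finset.mem_univ x) hx)]

end QW1Aux
namespace QW1Aux

open QW1 Matrix Complex

variable {ι : Type*} [Fintype ι] [DecidableEq ι]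

lemma mem_map_subtype (Λ : Finset ι) {S : Finset {x // x ∈ Λ}} {y : ι} :
    y ∈ S.map (Function.Embedding.subtype (· ∈ Λ)) ↔ ∃ h : y ∈ Λ, (⟨y, h⟩ : {x // x ∈ Λ}) ∈ S := by
  rw [Finset.mem_map]
  constructor
  · rintro ⟨a, ha, rfl⟩
    exact ⟨a.2, by simpa using ha⟩
  · rintro ⟨h, hS⟩
    exact ⟨⟨y, h⟩, hS, rfl⟩

lemma map_subtype_subset (Λ : Finset ι) (S : Finset {x // x ∈ Λ}) :
    S.map (Function.Embedding.subtype (· ∈ Λ)) ⊆ Λ := by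
  intro y hy
  exact ((mem_map_subtype Λ).1 hy).1

lemma subtype_map_eq_self (Λ : Finset ι) {T : Finset ι} (hT : T ⊆ Λ) :
    (T.subtype (· ∈ Λ)).map (Function.Embedding.subtype (· ∈ Λ)) = T := by
  rw [Finset.subtype_map]
  exact Finset.filter_true_of_mem fun x hx => hT hx

lemma subtype_of_map (Λ : Finset ι) (S : Finset {x // x ∈ Λ}) :
    (S.map (Function.Embedding.subtype (· ∈ Λ))).subtype (· ∈ Λ) = S := by
  ext x
  rw [Finset.mem_subtype, mem_map_subtype Λ]
  constructor
  · rintro ⟨h, hS⟩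
    have : (⟨(x : ι), h⟩ : {x // x ∈ Λ}) = x := Subtype.ext rfl
    rwa [this] at hS
  · intro hx
    exact ⟨x.2, by simpa using hx⟩

lemma card_subtype_of_subset (Λ : Finset ι) {T : Finset ι} (hT : T ⊆ Λ) :
    (T.subtype (· ∈ Λ)).card = T.card := by
  conv_rhs => rw [← subtype_map_eq_self Λ hT]
  rw [Finset.card_map]

lemma actsOn_embed (Λ : Finset ι) {K : QMat {x // x ∈ Λ}} {S : Finset {x // x ∈ Λ}}
    (hK : ActsOn S K) :
    ActsOn (S.map (Function.Embedding.subtype (· ∈ Λ))) (embed Λ K) := by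
  obtain ⟨M, hM, rfl⟩ := hK
  set T := S.map (Function.Embedding.subtype (· ∈ Λ)) with hTdef
  let e' : {x : {x // x ∈ Λ} // x ∈ S} → {y : ι // y ∈ T} := fun x =>
    ⟨x.1.1, (mem_map_subtype Λ).2 ⟨x.1.2, by simpa using x.2⟩⟩
  refine ⟨fun f g => M (fun x => f (e' x)) (fun x => g (e' x)), ?_, ?_⟩
  · unfold Matrix.IsHermitian
    ext f g
    show star _ = _
    exact (hM.apply _ _)
  · ext f g
    simp only [embed]
    by_cases hc : ∀ y : ι, y ∉ T → f y = g y
    · have h1 : ∀ x : ι, x ∉ Λ → f x = g x := fun x hx =>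
        hc x (fun hmem => hx (map_subtype_subset Λ S hmem))
      have h2 : ∀ x : {x // x ∈ Λ}, x ∉ S → f x.1 = g x.1 := by
        intro x hx
        refine hc x.1 (fun hmem => ?_)
        obtain ⟨h, hS⟩ := (mem_map_subtype Λ).1 hmem
        have : (⟨(x : ι), h⟩ : {x // x ∈ Λ}) = x := Subtype.ext rfl
        rw [this] at hS
        exact hx hS
      rw [if_pos h1, if_pos h2, if_pos hc]
    · rw [if_neg hc]
      by_cases h1 : ∀ x : ι, x ∉ Λ → f x = g x
      · by_cases h2 : ∀ x : {x // x ∈ Λ}, x ∉ S → f x.1 = g x.1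
        · exfalso
          refine hc fun y hy => ?_
          by_cases hyΛ : y ∈ Λ
          · refine h2 ⟨y, hyΛ⟩ (fun hS => hy ?_)
            exact (mem_map_subtype Λ).2 ⟨hyΛ, hS⟩
          · exact h1 y hyΛ
        · rw [if_pos h1, if_neg h2]
      · rw [if_neg h1]

lemma actsOn_add {Λ : Finset ι} {H₁ H₂ : QMat ι} (h₁ : ActsOn Λ H₁) (h₂ : ActsOn Λ H₂) :
    ActsOn Λ (H₁ + H₂) := by
  obtain ⟨M₁, hM₁, rfl⟩ := h₁
  obtain ⟨M₂, hM₂, rfl⟩ := h₂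
  exact ⟨M₁ + M₂, hM₁.add hM₂, (embed_add Λ M₁ M₂).symm⟩

/-- Push a decomposition on the subsystem `Λ` forward to the full system. -/
noncomputable def push (Λ : Finset ι) (FA : Finset {x // x ∈ Λ} → QMat {x // x ∈ Λ}) :
    Finset ι → QMat ι :=
  fun T => if hT : T ⊆ Λ then embed Λ (FA (T.subtype (· ∈ Λ))) else 0

lemma push_actsOn (Λ : Finset ι) (FA : Finset {x // x ∈ Λ} → QMat {x // x ∈ Λ})
    (hFA : ∀ S, ActsOn S (FA S)) (T : Finset ι) : ActsOn T (push Λ FA T) := by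
  unfold push
  split
  · rename_i hT
    have := actsOn_embed Λ (hFA (T.subtype (· ∈ Λ)))
    rwa [subtype_map_eq_self Λ hT] at this
  · exact actsOn_zero T

lemma push_sum (Λ : Finset ι) (FA : Finset {x // x ∈ Λ} → QMat {x // x ∈ Λ}) :
    ∑ T, push Λ FA T = embed Λ (∑ S, FA S) := by
  rw [embed_sum]
  rw [← Finset.sum_filter_add_sum_filter_not Finset.univ (· ⊆ Λ) (push Λ FA)]
  have h2 : ∑ T ∈ Finset.univ.filter (fun T => ¬ T ⊆ Λ), push Λ FA T = 0 := by
    refine Finset.sum_eq_zero fun T hT => ?_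
    rw [Finset.mem_filter] at hT
    exact dif_neg hT.2
  rw [h2, add_zero]
  refine Finset.sum_bij' (fun T _ => T.subtype (· ∈ Λ))
    (fun S _ => S.map (Function.Embedding.subtype (· ∈ Λ))) ?_ ?_ ?_ ?_ ?_
  · intro T hT; exact Finset.mem_univ _
  · intro S hS
    simp only [Finset.mem_filter]
    exact ⟨Finset.mem_univ _, map_subtype_subset Λ S⟩
  · intro T hT
    rw [Finset.mem_filter] at hT
    exact subtype_map_eq_self Λ hT.2
  · intro S hS
    exact subtype_of_map Λ S
  · intro T hT
    rw [Finset.mem_filter] at hT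
    exact dif_pos hT.2

lemma push_eq_zero_of_not_subset (Λ : Finset ι) (FA : Finset {x // x ∈ Λ} → QMat {x // x ∈ Λ})
    {T : Finset ι} (hT : ¬ T ⊆ Λ) : push Λ FA T = 0 := dif_neg hT

lemma push_site (c : ℕ → ℝ) (hc0 : ∀ k, 1 ≤ k → k ≤ Fintype.card ι → 0 ≤ c k)
    (Λ : Finset ι) (FA : Finset {x // x ∈ Λ} → QMat {x // x ∈ Λ})
    {x : ι} (hx : x ∈ Λ) :
    ∑ T ∈ Finset.univ.filter (fun T : Finset ι => x ∈ T), c T.card * opNorm (push Λ FA T)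
      ≤ ∑ S ∈ Finset.univ.filter (fun S : Finset {x // x ∈ Λ} => ⟨x, hx⟩ ∈ S),
          c S.card * opNorm (FA S) := by
  have hcT : ∀ T : Finset ι, x ∈ T → 0 ≤ c T.card := by
    intro T hxT
    exact hc0 T.card (Finset.card_pos.2 ⟨x, hxT⟩) (Finset.card_le_univ T)
  rw [← Finset.sum_filter_add_sum_filter_not
    (Finset.univ.filter (fun T : Finset ι => x ∈ T)) (· ⊆ Λ)]
  have h2 : ∑ T ∈ (Finset.univ.filter (fun T : Finset ι => x ∈ T)).filter (fun T => ¬ T ⊆ Λ),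
      c T.card * opNorm (push Λ FA T) = 0 := by
    refine Finset.sum_eq_zero fun T hT => ?_
    simp only [Finset.mem_filter] at hT
    rw [push_eq_zero_of_not_subset Λ FA hT.2, opNorm_zero, mul_zero]
  rw [h2, add_zero]
  have h3 : ∑ T ∈ (Finset.univ.filter (fun T : Finset ι => x ∈ T)).filter (· ⊆ Λ),
      c T.card * opNorm (push Λ FA T)
      ≤ ∑ T ∈ (Finset.univ.filter (fun T : Finset ι => x ∈ T)).filter (· ⊆ Λ),
        c T.card * opNorm (FA (T.subtype (· ∈ Λ))) := by
    refine Finset.sum_le_sum fun T hT => ?_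
    simp only [Finset.mem_filter] at hT
    rw [push, dif_pos hT.2]
    exact mul_le_mul_of_nonneg_left (opNorm_embed_le Λ _) (hcT T hT.1.2)
  refine h3.trans (le_of_eq ?_)
  refine Finset.sum_bij' (fun T _ => T.subtype (· ∈ Λ))
    (fun S _ => S.map (Function.Embedding.subtype (· ∈ Λ))) ?_ ?_ ?_ ?_ ?_
  · intro T hT
    simp only [Finset.mem_filter] at hT ⊢
    exact ⟨Finset.mem_univ _, Finset.mem_subtype.2 hT.1.2⟩
  · intro S hS
    simp only [Finset.mem_filter] at hS ⊢
    refine ⟨⟨Finset.mem_univ _, ?_⟩, map_subtype_subset Λ S⟩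
    exact (mem_map_subtype Λ).2 ⟨hx, hS.2⟩
  · intro T hT
    simp only [Finset.mem_filter] at hT
    exact subtype_map_eq_self Λ hT.2
  · intro S hS
    exact subtype_of_map Λ S
  · intro T hT
    simp only [Finset.mem_filter] at hT
    rw [card_subtype_of_subset Λ hT.2]

lemma push_site_zero (c : ℕ → ℝ) (Λ : Finset ι)
    (FA : Finset {x // x ∈ Λ} → QMat {x // x ∈ Λ}) {x : ι} (hx : x ∉ Λ) :
    ∑ T ∈ Finset.univ.filter (fun T : Finset ι => x ∈ T), c T.card * opNorm (push Λ FA T) = 0 := by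
  refine Finset.sum_eq_zero fun T hT => ?_
  simp only [Finset.mem_filter] at hT
  have : ¬ T ⊆ Λ := fun hsub => hx (hsub hT.2)
  rw [push_eq_zero_of_not_subset Λ FA this, opNorm_zero, mul_zero]

end QW1Aux
namespace QW1Aux

open QW1 Matrix Complex

variable {ι : Type*} [Fintype ι] [DecidableEq ι]

def locSet (c : ℕ → ℝ) (H : QMat ι) : Set ℝ :=
  {r | ∃ F : Finset ι → QMat ι, (∀ Λ, ActsOn Λ (F Λ)) ∧ H = ∑ Λ, F Λ ∧
    r = 2 * ⨆ x : ι, ∑ Λ ∈ Finset.univ.filter (fun Λ : Finset ι => x ∈ Λ),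
      c Λ.card * opNorm (F Λ)}

lemma localNorm_eq (c : ℕ → ℝ) (H : QMat ι) : localNorm c H = sInf (locSet c H) := rfl

def W1set (c : ℕ → ℝ) (Δ : QMat ι) : Set ℝ :=
  {r | ∃ H : QMat ι, H.IsHermitian ∧ localNorm c H ≤ 1 ∧ r = ((Δ * H).trace).re}

lemma W1loc_eq (c : ℕ → ℝ) (Δ : QMat ι) : W1loc c Δ = sSup (W1set c Δ) := rfl

lemma site_sum_nonneg (c : ℕ → ℝ) (hc0 : ∀ k, 1 ≤ k → k ≤ Fintype.card ι → 0 ≤ c k)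
    (F : Finset ι → QMat ι) (x : ι) :
    0 ≤ ∑ Λ ∈ Finset.univ.filter (fun Λ : Finset ι => x ∈ Λ), c Λ.card * opNorm (F Λ) := by
  refine Finset.sum_nonneg fun T hT => ?_
  simp only [Finset.mem_filter] at hT
  exact mul_nonneg (hc0 T.card (Finset.card_pos.2 ⟨x, hT.2⟩) (Finset.card_le_univ T))
    (opNorm_nonneg _)

lemma locSet_nonneg (c : ℕ → ℝ) (hc0 : ∀ k, 1 ≤ k → k ≤ Fintype.card ι → 0 ≤ c k)
    (H : QMat ι) {r : ℝ} (hr : r ∈ locSet c H) : 0 ≤ r := by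
  obtain ⟨F, -, -, rfl⟩ := hr
  have : (0:ℝ) ≤ ⨆ x : ι, ∑ Λ ∈ Finset.univ.filter (fun Λ : Finset ι => x ∈ Λ),
      c Λ.card * opNorm (F Λ) := Real.iSup_nonneg fun x => site_sum_nonneg c hc0 F x
  linarith

lemma locSet_bddBelow (c : ℕ → ℝ) (hc0 : ∀ k, 1 ≤ k → k ≤ Fintype.card ι → 0 ≤ c k)
    (H : QMat ι) : BddBelow (locSet c H) :=
  ⟨0, fun r hr => locSet_nonneg c hc0 H hr⟩

lemma locSet_nonempty {H : QMat ι} (hH : H.IsHermitian) (c : ℕ → ℝ) :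
    (locSet c H).Nonempty := by
  classical
  refine ⟨_, ⟨fun T => if T = Finset.univ then H else 0, fun T => ?_, ?_, rfl⟩⟩
  · by_cases h : T = Finset.univ
    · subst h; simpa using actsOn_univ hH
    · simp only [h, if_neg, if_false]
      exact actsOn_zero T
  · simp

lemma zero_mem_locSet (c : ℕ → ℝ) : (0:ℝ) ∈ locSet c (0 : QMat ι) := by
  refine ⟨fun _ => 0, fun T => actsOn_zero T, by simp, ?_⟩
  have h1 : ∀ x : ι, ∑ Λ ∈ Finset.univ.filter (fun Λ : Finset ι => x ∈ Λ),
      c Λ.card * opNorm ((0 : QMat ι)) = 0 := by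
    intro x
    refine Finset.sum_eq_zero fun T _ => ?_
    rw [opNorm_zero, mul_zero]
  simp only [h1]
  have : (⨆ _ : ι, (0:ℝ)) = 0 :=
    le_antisymm (Real.iSup_le (fun _ => le_rfl) le_rfl) (Real.iSup_nonneg fun _ => le_rfl)
  rw [this, mul_zero]

lemma localNorm_zero_le_one (c : ℕ → ℝ) (hc0 : ∀ k, 1 ≤ k → k ≤ Fintype.card ι → 0 ≤ c k) :
    localNorm c (0 : QMat ι) ≤ 1 := by
  rw [localNorm_eq]
  exact (csInf_le (locSet_bddBelow c hc0 0) (zero_mem_locSet c)).trans zero_le_one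

lemma zero_mem_W1set (c : ℕ → ℝ) (hc0 : ∀ k, 1 ≤ k → k ≤ Fintype.card ι → 0 ≤ c k)
    (Δ : QMat ι) : (0:ℝ) ∈ W1set c Δ :=
  ⟨0, Matrix.isHermitian_zero, localNorm_zero_le_one c hc0, by simp⟩

/-- entrywise 1-norm -/
noncomputable def entrySum (Δ : QMat ι) : ℝ := ∑ f, ∑ g, ‖Δ f g‖

lemma entrySum_nonneg (Δ : QMat ι) : 0 ≤ entrySum Δ :=
  Finset.sum_nonneg fun _ _ => Finset.sum_nonneg fun _ _ => norm_nonneg _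

lemma re_trace_mul_le (Δ B : QMat ι) : ((Δ * B).trace).re ≤ entrySum Δ * opNorm B := by
  refine (Complex.re_le_norm _).trans ?_
  rw [Matrix.trace]
  refine (norm_sum_le _ _).trans ?_
  rw [entrySum, Finset.sum_mul]
  refine Finset.sum_le_sum fun f _ => ?_
  simp only [Matrix.diag_apply, Matrix.mul_apply]
  refine (norm_sum_le _ _).trans ?_
  rw [Finset.sum_mul]
  refine Finset.sum_le_sum fun g _ => ?_
  rw [norm_mul]
  exact mul_le_mul_of_nonneg_left (entry_le_opNorm B g f) (norm_nonneg _)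

lemma double_count (a : Finset ι → ℝ) :
    ∑ x : ι, ∑ T ∈ Finset.univ.filter (fun T : Finset ι => x ∈ T), a T
      = ∑ T : Finset ι, (T.card : ℝ) * a T := by
  simp only [Finset.sum_filter]
  rw [Finset.sum_comm]
  refine Finset.sum_congr rfl fun T _ => ?_
  rw [Finset.sum_ite_mem, Finset.univ_inter, Finset.sum_const, nsmul_eq_mul]

lemma W1set_le (c : ℕ → ℝ) (hc1 : ∀ k, 1 ≤ k → k ≤ Fintype.card ι → 1 ≤ c k)
    (Δ : QMat ι) (hΔtr : Δ.trace = 0) {r : ℝ} (hr : r ∈ W1set c Δ) :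
    r ≤ entrySum Δ * Fintype.card ι := by
  classical
  have hc0 : ∀ k, 1 ≤ k → k ≤ Fintype.card ι → 0 ≤ c k :=
    fun k h1 h2 => zero_le_one.trans (hc1 k h1 h2)
  obtain ⟨H, hH, hloc, rfl⟩ := hr
  rw [localNorm_eq] at hloc
  have hlt : sInf (locSet c H) < 2 := lt_of_le_of_lt hloc one_lt_two
  obtain ⟨v, hv, hv2⟩ := (csInf_lt_iff (locSet_bddBelow c hc0 H) (locSet_nonempty hH c)).1 hlt
  obtain ⟨F, hF, hHsum, rfl⟩ := hv
  set g : ι → ℝ := fun x => ∑ T ∈ Finset.univ.filter (fun T : Finset ι => x ∈ T),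
    c T.card * opNorm (F T) with hg
  have hsite : ∀ x : ι, g x ≤ 1 := by
    intro x
    have h1 : g x ≤ ⨆ y, g y := le_ciSup (Set.Finite.bddAbove (Set.finite_range g)) x
    linarith
  -- trace splits over the decomposition
  have htr : ((Δ * H).trace).re = ∑ T : Finset ι, ((Δ * F T).trace).re := by
    rw [hHsum, Matrix.mul_sum, Matrix.trace_sum, Complex.re_sum]
  rw [htr]
  have hempty : ((Δ * F ∅).trace).re = 0 := by
    obtain ⟨M, hM, hFM⟩ := hF ∅
    rw [hFM, trace_mul_embed_empty Δ hΔtr M, Complex.zero_re]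
  have hsplit : ∑ T : Finset ι, ((Δ * F T).trace).re
      = ((Δ * F ∅).trace).re + ∑ T ∈ Finset.univ.erase ∅, ((Δ * F T).trace).re := by
    rw [← Finset.sum_erase_add Finset.univ _ (Finset.mem_univ (∅ : Finset ι)), add_comm]
  rw [hsplit, hempty, zero_add]
  have hbound1 : ∑ T ∈ Finset.univ.erase ∅, ((Δ * F T).trace).re
      ≤ ∑ T ∈ Finset.univ.erase ∅, entrySum Δ * opNorm (F T) :=
    Finset.sum_le_sum fun T _ => re_trace_mul_le Δ (F T)
  have hbound2 : ∑ T ∈ Finset.univ.erase ∅, entrySum Δ * opNorm (F T)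
      = entrySum Δ * ∑ T ∈ Finset.univ.erase ∅, opNorm (F T) := by
    rw [Finset.mul_sum]
  have hbound3 : ∑ T ∈ Finset.univ.erase ∅, opNorm (F T)
      ≤ ∑ T : Finset ι, (T.card : ℝ) * (c T.card * opNorm (F T)) := by
    have step1 : ∑ T ∈ Finset.univ.erase ∅, opNorm (F T)
        ≤ ∑ T ∈ Finset.univ.erase ∅, (T.card : ℝ) * (c T.card * opNorm (F T)) := by
      refine Finset.sum_le_sum fun T hT => ?_
      have hTne : T ≠ ∅ := (Finset.mem_erase.1 hT).1
      have hcard : 1 ≤ T.card := Finset.card_pos.2 (Finset.nonempty_iff_ne_empty.2 hTne)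
      have hc : 1 ≤ c T.card := hc1 T.card hcard (Finset.card_le_univ T)
      have h1 : opNorm (F T) ≤ c T.card * opNorm (F T) :=
        le_mul_of_one_le_left (opNorm_nonneg _) hc
      refine h1.trans ?_
      refine le_mul_of_one_le_left (mul_nonneg (by linarith) (opNorm_nonneg _)) ?_
      exact_mod_cast hcard
    refine step1.trans ?_
    refine Finset.sum_le_sum_of_subset_of_nonneg (Finset.erase_subset _ _) fun T _ hT => ?_
    by_cases hTe : T = ∅
    · subst hTe; simp
    · have hcard : 1 ≤ T.card := Finset.card_pos.2 (Finset.nonempty_iff_ne_empty.2 hTe)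
      have hc : 0 ≤ c T.card := hc0 T.card hcard (Finset.card_le_univ T)
      exact mul_nonneg (by positivity) (mul_nonneg hc (opNorm_nonneg _))
  have hbound4 : ∑ T : Finset ι, (T.card : ℝ) * (c T.card * opNorm (F T))
      ≤ (Fintype.card ι : ℝ) := by
    rw [← double_count (fun T => c T.card * opNorm (F T))]
    calc ∑ x : ι, g x ≤ ∑ _x : ι, (1:ℝ) := Finset.sum_le_sum fun x _ => hsite x
      _ = Fintype.card ι := by simp
  calc ∑ T ∈ Finset.univ.erase ∅, ((Δ * F T).trace).re
      ≤ entrySum Δ * ∑ T ∈ Finset.univ.erase ∅, opNorm (F T) := by rw [← hbound2]; exact hbound1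
    _ ≤ entrySum Δ * (Fintype.card ι : ℝ) := by
        refine mul_le_mul_of_nonneg_left (hbound3.trans hbound4) (entrySum_nonneg Δ)

lemma W1set_bddAbove (c : ℕ → ℝ) (hc1 : ∀ k, 1 ≤ k → k ≤ Fintype.card ι → 1 ≤ c k)
    (Δ : QMat ι) (hΔtr : Δ.trace = 0) : BddAbove (W1set c Δ) :=
  ⟨entrySum Δ * Fintype.card ι, fun r hr => W1set_le c hc1 Δ hΔtr hr⟩

end QW1Aux
namespace QW1Aux

open QW1 Matrix Complex

variable {ι : Type*} [Fintype ι] [DecidableEq ι]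

lemma superadd (c : ℕ → ℝ) (hc1 : ∀ k, 1 ≤ k → k ≤ Fintype.card ι → 1 ≤ c k)
    (Λ : Finset ι) (Δ : QMat ι) (hΔ : Δ.IsHermitian) (hΔtr : Δ.trace = 0) :
    W1loc c (ptrace Λ Δ) + W1loc c (ptrace Λᶜ Δ) ≤ W1loc c Δ := by
  classical
  have hc0 : ∀ k, 1 ≤ k → k ≤ Fintype.card ι → 0 ≤ c k :=
    fun k h1 h2 => zero_le_one.trans (hc1 k h1 h2)
  have hcardΛ : Fintype.card {x // x ∈ Λ} ≤ Fintype.card ι := by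
    rw [Fintype.card_coe]; exact Finset.card_le_univ Λ
  have hcardΛc : Fintype.card {x // x ∈ Λᶜ} ≤ Fintype.card ι := by
    rw [Fintype.card_coe]; exact Finset.card_le_univ Λᶜ
  have hc0A : ∀ k, 1 ≤ k → k ≤ Fintype.card {x // x ∈ Λ} → 0 ≤ c k :=
    fun k h1 h2 => hc0 k h1 (h2.trans hcardΛ)
  have hc0B : ∀ k, 1 ≤ k → k ≤ Fintype.card {x // x ∈ Λᶜ} → 0 ≤ c k :=
    fun k h1 h2 => hc0 k h1 (h2.trans hcardΛc)
  have key : ∀ a ∈ W1set c (ptrace Λ Δ), ∀ b ∈ W1set c (ptrace Λᶜ Δ),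
      a + b ≤ W1loc c Δ := by
    rintro a ⟨HA, hHA, hlocA, rfl⟩ b ⟨HB, hHB, hlocB, rfl⟩
    set H : QMat ι := embed Λ HA + embed Λᶜ HB with hHdef
    have hH : H.IsHermitian := (embed_isHermitian Λ hHA).add (embed_isHermitian Λᶜ hHB)
    have hloc : localNorm c H ≤ 1 := by
      refine le_of_forall_pos_le_add ?_
      intro ε hε
      have hltA : sInf (locSet c HA) < 1 + ε := by
        rw [localNorm_eq] at hlocA; linarith
      have hltB : sInf (locSet c HB) < 1 + ε := by
        rw [localNorm_eq] at hlocB; linarith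
      obtain ⟨vA, hvAmem, hvA2⟩ :=
        (csInf_lt_iff (locSet_bddBelow c hc0A HA) (locSet_nonempty hHA c)).1 hltA
      obtain ⟨vB, hvBmem, hvB2⟩ :=
        (csInf_lt_iff (locSet_bddBelow c hc0B HB) (locSet_nonempty hHB c)).1 hltB
      obtain ⟨FA, hFA, hAsum, hvalA⟩ := hvAmem
      obtain ⟨FB, hFB, hBsum, hvalB⟩ := hvBmem
      set F : Finset ι → QMat ι := fun T => push Λ FA T + push Λᶜ FB T with hFdef
      have hFacts : ∀ T, ActsOn T (F T) := fun T =>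
        actsOn_add (push_actsOn Λ FA hFA T) (push_actsOn Λᶜ FB hFB T)
      have hsum : H = ∑ T, F T := by
        rw [hHdef, hFdef]
        rw [Finset.sum_add_distrib, push_sum, push_sum, ← hAsum, ← hBsum]
      have hmem : (2 * ⨆ x : ι, ∑ T ∈ Finset.univ.filter (fun T : Finset ι => x ∈ T),
          c T.card * opNorm (F T)) ∈ locSet c H := ⟨F, hFacts, hsum, rfl⟩
      have hstep : localNorm c H ≤ 2 * ⨆ x : ι, ∑ T ∈ Finset.univ.filter
          (fun T : Finset ι => x ∈ T), c T.card * opNorm (F T) := by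
        rw [localNorm_eq]
        exact csInf_le (locSet_bddBelow c hc0 H) hmem
      have hsite : ∀ x : ι, ∑ T ∈ Finset.univ.filter (fun T : Finset ι => x ∈ T),
          c T.card * opNorm (F T) ≤ (1 + ε) / 2 := by
        intro x
        by_cases hx : x ∈ Λ
        · have hzero : ∀ T ∈ Finset.univ.filter (fun T : Finset ι => x ∈ T),
              c T.card * opNorm (F T) = c T.card * opNorm (push Λ FA T) := by
            intro T hT
            simp only [Finset.mem_filter] at hT
            have hns : ¬ T ⊆ Λᶜ := fun hsub => (Finset.mem_compl.1 (hsub hT.2)) hx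
            rw [hFdef]
            simp only
            rw [push_eq_zero_of_not_subset Λᶜ FB hns, add_zero]
          rw [Finset.sum_congr rfl hzero]
          refine (push_site c hc0 Λ FA hx).trans ?_
          set gA : {x // x ∈ Λ} → ℝ := fun y =>
            ∑ S ∈ Finset.univ.filter (fun S : Finset {x // x ∈ Λ} => y ∈ S),
              c S.card * opNorm (FA S) with hgA
          have h1 : gA ⟨x, hx⟩ ≤ ⨆ y, gA y :=
            le_ciSup (Set.Finite.bddAbove (Set.finite_range gA)) ⟨x, hx⟩
          have h2 : vA = 2 * ⨆ y, gA y := hvalA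
          linarith
        · have hx' : x ∈ Λᶜ := Finset.mem_compl.2 hx
          have hzero : ∀ T ∈ Finset.univ.filter (fun T : Finset ι => x ∈ T),
              c T.card * opNorm (F T) = c T.card * opNorm (push Λᶜ FB T) := by
            intro T hT
            simp only [Finset.mem_filter] at hT
            have hns : ¬ T ⊆ Λ := fun hsub => hx (hsub hT.2)
            rw [hFdef]
            simp only
            rw [push_eq_zero_of_not_subset Λ FA hns, zero_add]
          rw [Finset.sum_congr rfl hzero]
          refine (push_site c hc0 Λᶜ FB hx').trans ?_
          set gB : {x // x ∈ Λᶜ} → ℝ := fun y =>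
            ∑ S ∈ Finset.univ.filter (fun S : Finset {x // x ∈ Λᶜ} => y ∈ S),
              c S.card * opNorm (FB S) with hgB
          have h1 : gB ⟨x, hx'⟩ ≤ ⨆ y, gB y :=
            le_ciSup (Set.Finite.bddAbove (Set.finite_range gB)) ⟨x, hx'⟩
          have h2 : vB = 2 * ⨆ y, gB y := hvalB
          linarith
      have hsup : (⨆ x : ι, ∑ T ∈ Finset.univ.filter (fun T : Finset ι => x ∈ T),
          c T.card * opNorm (F T)) ≤ (1 + ε) / 2 :=
        Real.iSup_le hsite (by linarith)
      linarith [hstep, hsup]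
    have hmemΔ : ((Δ * H).trace).re ∈ W1set c Δ := ⟨H, hH, hloc, rfl⟩
    have htr : ((Δ * H).trace).re
        = ((ptrace Λ Δ * HA).trace).re + ((ptrace Λᶜ Δ * HB).trace).re := by
      have hmul : Δ * H = Δ * embed Λ HA + Δ * embed Λᶜ HB := by
        rw [hHdef, mul_add]
      rw [hmul, Matrix.trace_add, trace_mul_embed, trace_mul_embed, Complex.add_re]
    have hle := le_csSup (W1set_bddAbove c hc1 Δ hΔtr) hmemΔ
    rw [htr] at hle
    rw [W1loc_eq]
    exact hle
  have hAne : (W1set c (ptrace Λ Δ)).Nonempty := ⟨0, zero_mem_W1set c hc0A _⟩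
  have hBne : (W1set c (ptrace Λᶜ Δ)).Nonempty := ⟨0, zero_mem_W1set c hc0B _⟩
  rw [W1loc_eq c (ptrace Λ Δ), W1loc_eq c (ptrace Λᶜ Δ)]
  have h1 : sSup (W1set c (ptrace Λ Δ)) ≤ W1loc c Δ - sSup (W1set c (ptrace Λᶜ Δ)) := by
    refine csSup_le hAne fun a ha => ?_
    have h2 : sSup (W1set c (ptrace Λᶜ Δ)) ≤ W1loc c Δ - a :=
      csSup_le hBne fun b hb => by linarith [key a ha b hb]
    linarith
  linarith

end QW1Aux

/-- Superadditivity of the local quantum `W₁` norm with respect to the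
composition of quantum systems: `‖Δ‖_{W₁loc} ≥ ‖Tr_{Λᶜ}Δ‖_{W₁loc} + ‖Tr_Λ Δ‖_{W₁loc}`
for a region `Λ` of size `m` in an `(m+n)`-qubit system; in particular for differences
of states. -/
theorem stmt5 {m n : ℕ} (c : ℕ → ℝ) (hc1 : c 1 = 1)
    (hcmono : ∀ k l, 1 ≤ k → k ≤ l → l ≤ m + n → c k ≤ c l)
    (Λ : Finset (Fin (m + n))) (hΛ : Λ.card = m)
    (Δ : QMat (Fin (m + n))) (hΔ : Δ.IsHermitian) (hΔtr : Δ.trace = 0) :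
    W1loc c (ptrace Λ Δ) + W1loc c (ptrace Λᶜ Δ) ≤ W1loc c Δ ∧
    ∀ ρ σ : QMat (Fin (m + n)), IsState ρ → IsState σ →
      W1loc c (ptrace Λ ρ - ptrace Λ σ) + W1loc c (ptrace Λᶜ ρ - ptrace Λᶜ σ) ≤
        W1loc c (ρ - σ) := by
  have hc1' : ∀ k, 1 ≤ k → k ≤ Fintype.card (Fin (m + n)) → 1 ≤ c k := by
    intro k h1 h2
    rw [Fintype.card_fin] at h2
    calc (1:ℝ) = c 1 := hc1.symm
      _ ≤ c k := hcmono 1 k le_rfl h1 h2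
  constructor
  · exact QW1Aux.superadd c hc1' Λ Δ hΔ hΔtr
  · intro ρ σ hρ hσ
    have hherm : (ρ - σ).IsHermitian := hρ.1.1.sub hσ.1.1
    have htr : (ρ - σ).trace = 0 := by
      rw [Matrix.trace_sub, hρ.2, hσ.2, sub_self]
    have h := QW1Aux.superadd c hc1' Λ (ρ - σ) hherm htr
    rwa [QW1Aux.ptrace_sub, QW1Aux.ptrace_sub] at h
end
end

section
/- For any bit strings x, y ∈ {0,1}ⁿ, the local quantum W₁ norm of the difference of the corresponding computational-basis projectors equals the Hamming distance: ‖|x⟩⟨x| − |y⟩⟨y|‖_{W₁loc} = |{ i ∈ [n] : x_i ≠ y_i }|. -/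
open Matrix BigOperators
open scoped ComplexOrder

noncomputable section

open QW1 Matrix Complex


namespace QW1

variable {ι : Type*} [Fintype ι] [DecidableEq ι]

section OpNormLemmas

variable {d : Type*} [Fintype d] [DecidableEq d]

lemma opNorm_nonneg (A : Matrix d d ℂ) : 0 ≤ opNorm A :=
  Real.iSup_nonneg fun _ => Real.sqrt_nonneg _

lemma sqrt_eig_le_opNorm (A : Matrix d d ℂ) (i : d) :
    Real.sqrt ((Matrix.isHermitian_conjTranspose_mul_self A).eigenvalues i) ≤ opNorm A :=
  le_ciSup (f := fun j => Real.sqrt ((Matrix.isHermitian_conjTranspose_mul_self A).eigenvalues j))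
    (Set.Finite.bddAbove (Set.finite_range _)) i

lemma eig_le_opNorm_sq (A : Matrix d d ℂ) (i : d) :
    (Matrix.isHermitian_conjTranspose_mul_self A).eigenvalues i ≤ opNorm A ^ 2 := by
  have h0 : 0 ≤ (Matrix.isHermitian_conjTranspose_mul_self A).eigenvalues i :=
    (Matrix.posSemidef_conjTranspose_mul_self A).eigenvalues_nonneg i
  have h1 := sqrt_eig_le_opNorm A i
  nlinarith [Real.sq_sqrt h0,
    Real.sqrt_nonneg ((Matrix.isHermitian_conjTranspose_mul_self A).eigenvalues i)]

lemma diag_abs_le_opNorm (A : Matrix d d ℂ) (z : d) : ‖A z z‖ ≤ opNorm A := by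
  have hP : (Aᴴ * A).IsHermitian := Matrix.isHermitian_conjTranspose_mul_self A
  have e1 : ((Aᴴ * A) z z).re = ∑ k, Complex.normSq (A k z) := by
    simp [Matrix.mul_apply, Matrix.conjTranspose_apply, Complex.re_sum,
      Complex.mul_re, Complex.normSq_apply]
  have step1 : ‖A z z‖ ^ 2 ≤ ((Aᴴ * A) z z).re := by
    rw [e1, ← Complex.normSq_eq_norm_sq]
    exact Finset.single_le_sum (f := fun k => Complex.normSq (A k z))
      (fun k _ => Complex.normSq_nonneg _) (Finset.mem_univ z)
  have spec := hP.spectral_theorem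
  set U : Matrix d d ℂ := (hP.eigenvectorUnitary : Matrix d d ℂ) with hU
  have hrow : ∑ j, Complex.normSq (U z j) = 1 := by
    have h1 : U * star U = 1 := Matrix.mem_unitaryGroup_iff.mp hP.eigenvectorUnitary.2
    have := congrFun (congrFun h1 z) z
    simp only [Matrix.mul_apply, Matrix.one_apply_eq] at this
    have : (∑ j, U z j * (star U) j z).re = 1 := by rw [this]; simp
    simpa [Matrix.star_apply, Complex.re_sum, Complex.mul_re, Complex.normSq_apply,
      Complex.conj_re, Complex.conj_im] using this
  have e2 : ((Aᴴ * A) z z).re = ∑ j, hP.eigenvalues j * Complex.normSq (U z j) := by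
    conv_lhs => rw [spec, Unitary.conjStarAlgAut_apply]
    simp only [Matrix.mul_apply, Matrix.diagonal_apply, Function.comp]
    simp only [mul_ite, ite_mul, mul_zero, zero_mul, Finset.sum_ite_eq',
      Finset.mem_univ, if_true, Matrix.star_apply, Complex.re_sum]
    apply Finset.sum_congr rfl
    intro j _
    simp [Complex.mul_re, Complex.normSq_apply, Complex.conj_re, Complex.conj_im,
      RCLike.ofReal]
    rw [hU, Matrix.IsHermitian.eigenvectorUnitary_apply]
    ring
  have step2 : ((Aᴴ * A) z z).re ≤ opNorm A ^ 2 := by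
    rw [e2]
    calc ∑ j, hP.eigenvalues j * Complex.normSq (U z j)
        ≤ ∑ j, opNorm A ^ 2 * Complex.normSq (U z j) := by
          apply Finset.sum_le_sum
          intro j _
          exact mul_le_mul_of_nonneg_right (eig_le_opNorm_sq A j) (Complex.normSq_nonneg _)
      _ = opNorm A ^ 2 := by rw [← Finset.mul_sum, hrow, mul_one]
  have habs : ‖A z z‖ ^ 2 ≤ opNorm A ^ 2 := le_trans step1 step2
  have := opNorm_nonneg A
  nlinarith [norm_nonneg (A z z)]

lemma opNorm_diagonal_le (v : d → ℂ) (t : ℝ) (ht : 0 ≤ t)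
    (h : ∀ i, ‖v i‖ ≤ t) : opNorm (Matrix.diagonal v) ≤ t := by
  apply Real.iSup_le _ ht
  intro j
  set A := Matrix.diagonal v with hA
  have hP : (Aᴴ * A).IsHermitian := Matrix.isHermitian_conjTranspose_mul_self A
  have hdiag : Aᴴ * A = Matrix.diagonal (fun i => starRingEnd ℂ (v i) * v i) := by
    rw [hA, Matrix.diagonal_conjTranspose, Matrix.diagonal_mul_diagonal]
    rfl
  set w : d → ℂ := (WithLp.equiv 2 (d → ℂ)) (hP.eigenvectorBasis j) with hw
  have hmul := hP.mulVec_eigenvectorBasis j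
  have hwne : w ≠ 0 := by
    intro h0
    have := (hP.eigenvectorBasis).orthonormal.ne_zero j
    apply this
    apply (WithLp.equiv 2 (d → ℂ)).injective
    simpa [← hw] using h0
  obtain ⟨i, hi⟩ := Function.ne_iff.mp hwne
  have hcomp := congrFun hmul i
  have hcomp' : ((Matrix.diagonal fun k => starRingEnd ℂ (v k) * v k) *ᵥ w) i
      = hP.eigenvalues j • w i := by rw [← hdiag]; exact hcomp
  have : (starRingEnd ℂ (v i) * v i) * w i = (hP.eigenvalues j : ℂ) * w i := by
    simpa [Matrix.mulVec_diagonal, Complex.real_smul] using hcomp'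
  have hval : (starRingEnd ℂ (v i) * v i) = (hP.eigenvalues j : ℂ) :=
    mul_right_cancel₀ hi this
  have hre : hP.eigenvalues j = Complex.normSq (v i) := by
    have := congrArg Complex.re hval
    simpa [Complex.mul_re, Complex.normSq_apply, Complex.conj_re, Complex.conj_im] using this.symm
  rw [hre]
  have : Complex.normSq (v i) ≤ t ^ 2 := by
    have := h i
    nlinarith [Complex.normSq_eq_norm_sq (v i), norm_nonneg (v i)]
  calc Real.sqrt (Complex.normSq (v i)) ≤ Real.sqrt (t ^ 2) := Real.sqrt_le_sqrt this
    _ = t := by rw [Real.sqrt_sq ht]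

lemma opNorm_zero : opNorm (0 : Matrix d d ℂ) = 0 := by
  have h1 : opNorm (0 : Matrix d d ℂ) ≤ 0 := by
    have := opNorm_diagonal_le (fun _ : d => (0 : ℂ)) 0 le_rfl (by simp)
    simpa using this
  linarith [opNorm_nonneg (0 : Matrix d d ℂ)]

end OpNormLemmas

lemma embed_zero (Λ : Finset ι) : embed Λ (0 : Matrix _ _ ℂ) = 0 := by
  funext f g; simp [embed]

lemma actsOn_zero (Λ : Finset ι) : ActsOn Λ (0 : QMat ι) :=
  ⟨0, Matrix.isHermitian_zero, (embed_zero Λ).symm⟩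

lemma embed_diag_apply (Λ : Finset ι) (M) (z : ι → Fin 2) :
    embed Λ M z z = M (fun x => z x.1) (fun x => z x.1) := by
  simp [embed]

lemma embed_diag_congr (Λ : Finset ι) (M) (z z' : ι → Fin 2)
    (h : ∀ w ∈ Λ, z w = z' w) : embed Λ M z z = embed Λ M z' z' := by
  rw [embed_diag_apply, embed_diag_apply]
  congr 1 <;> · funext x; exact h x.1 x.2

lemma embed_diagonal (Λ : Finset ι) (v : ({x // x ∈ Λ} → Fin 2) → ℂ) :
    embed Λ (Matrix.diagonal v) =
      Matrix.diagonal (fun f : ι → Fin 2 => v (fun x => f x.1)) := by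
  funext f g
  by_cases hfg : f = g
  · subst hfg; simp [embed, Matrix.diagonal]
  · rw [Matrix.diagonal_apply_ne _ hfg]
    simp only [embed, Matrix.diagonal_apply]
    split_ifs with h3 h4
    · exact absurd (funext fun w => by
        by_cases hw : w ∈ Λ
        · exact congrFun h4 ⟨w, hw⟩
        · exact h3 w hw) hfg
    · rfl
    · rfl

lemma isHermitian_embed {Λ : Finset ι} {M} (hM : M.IsHermitian) :
    (embed Λ M).IsHermitian := by
  unfold Matrix.IsHermitian
  funext f g
  simp only [Matrix.conjTranspose_apply, embed]
  have hsym : (∀ x : ι, x ∉ Λ → g x = f x) ↔ (∀ x : ι, x ∉ Λ → f x = g x) :=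
    ⟨fun h x hx => (h x hx).symm, fun h x hx => (h x hx).symm⟩
  by_cases h : ∀ x : ι, x ∉ Λ → f x = g x
  · rw [if_pos (hsym.mpr h), if_pos h]
    exact congrFun (congrFun hM _) _
  · rw [if_neg (fun hh => h (hsym.mp hh)), if_neg h]; simp

lemma isHermitian_sum_embed {d α : Type*} [Fintype d] [DecidableEq d] {s : Finset α}
    {F : α → Matrix d d ℂ}
    (h : ∀ a ∈ s, (F a).IsHermitian) : (∑ a ∈ s, F a).IsHermitian := by
  unfold Matrix.IsHermitian
  rw [Matrix.conjTranspose_sum]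
  exact Finset.sum_congr rfl h

lemma sum_apply_re (F : Finset ι → QMat ι) (z : ι → Fin 2) :
    ((∑ Λ, F Λ) z z).re = ∑ Λ, (F Λ z z).re := by
  rw [Matrix.sum_apply]
  exact Complex.re_sum _ _

lemma flip_bound (c : ℕ → ℝ) (hc : ∀ Λ : Finset ι, Λ.Nonempty → 1 ≤ c Λ.card)
    (F : Finset ι → QMat ι) (hF : ∀ Λ, ActsOn Λ (F Λ)) (a : ι)
    (z z' : ι → Fin 2) (hzz : ∀ w, w ≠ a → z w = z' w) :
    ((∑ Λ, F Λ) z z).re - ((∑ Λ, F Λ) z' z').re ≤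
      2 * ⨆ x : ι, ∑ Λ ∈ Finset.univ.filter (fun Λ : Finset ι => x ∈ Λ),
        c Λ.card * opNorm (F Λ) := by
  rw [sum_apply_re, sum_apply_re, ← Finset.sum_sub_distrib]
  rw [← Finset.sum_filter_add_sum_filter_not Finset.univ (fun Λ : Finset ι => a ∈ Λ)]
  have h2 : ∑ Λ ∈ Finset.univ.filter (fun Λ : Finset ι => ¬ a ∈ Λ),
      ((F Λ z z).re - (F Λ z' z').re) = 0 := by
    apply Finset.sum_eq_zero
    intro Λ hΛ
    obtain ⟨M, _, hFM⟩ := hF Λ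
    have haΛ : a ∉ Λ := by simpa using hΛ
    have : F Λ z z = F Λ z' z' := by
      rw [hFM]
      apply embed_diag_congr
      intro w hw
      exact hzz w (fun h => haΛ (h ▸ hw))
    rw [this]; ring
  rw [h2, add_zero]
  have h3 : ∑ Λ ∈ Finset.univ.filter (fun Λ : Finset ι => a ∈ Λ),
      ((F Λ z z).re - (F Λ z' z').re) ≤
      ∑ Λ ∈ Finset.univ.filter (fun Λ : Finset ι => a ∈ Λ),
        2 * (c Λ.card * opNorm (F Λ)) := by
    apply Finset.sum_le_sum
    intro Λ hΛ
    have haΛ : a ∈ Λ := by simpa using hΛ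
    have hb1 : (F Λ z z).re ≤ opNorm (F Λ) :=
      le_trans (Complex.re_le_norm _) (diag_abs_le_opNorm _ _)
    have hb2 : -(F Λ z' z').re ≤ opNorm (F Λ) := by
      have habs := le_trans (Complex.abs_re_le_norm (F Λ z' z')) (diag_abs_le_opNorm (F Λ) z')
      linarith [neg_abs_le ((F Λ z' z').re), le_abs_self ((F Λ z' z').re)]
    have hc1 : 1 ≤ c Λ.card := hc Λ ⟨a, haΛ⟩
    have hop := opNorm_nonneg (F Λ)
    nlinarith
  refine le_trans h3 ?_
  rw [← Finset.mul_sum]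
  apply mul_le_mul_of_nonneg_left _ (by norm_num)
  exact le_ciSup (f := fun x : ι => ∑ Λ ∈ Finset.univ.filter (fun Λ : Finset ι => x ∈ Λ),
    c Λ.card * opNorm (F Λ)) (Set.Finite.bddAbove (Set.finite_range _)) a

lemma telescope_bound (c : ℕ → ℝ) (hc : ∀ Λ : Finset ι, Λ.Nonempty → 1 ≤ c Λ.card)
    (F : Finset ι → QMat ι) (hF : ∀ Λ, ActsOn Λ (F Λ)) (x y : ι → Fin 2) :
    ((∑ Λ, F Λ) x x).re - ((∑ Λ, F Λ) y y).re ≤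
      ((Finset.univ.filter fun i => x i ≠ y i).card : ℝ) *
        (2 * ⨆ z : ι, ∑ Λ ∈ Finset.univ.filter (fun Λ : Finset ι => z ∈ Λ),
          c Λ.card * opNorm (F Λ)) := by
  set r := 2 * ⨆ z : ι, ∑ Λ ∈ Finset.univ.filter (fun Λ : Finset ι => z ∈ Λ),
    c Λ.card * opNorm (F Λ) with hr
  set H := ∑ Λ, F Λ with hH
  set mix : Finset ι → ι → Fin 2 := fun T i => if i ∈ T then x i else y i with hmix
  have key : ∀ T : Finset ι, (H (mix T) (mix T)).re - (H y y).re ≤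
      ((T.filter fun i => x i ≠ y i).card : ℝ) * r := by
    intro T
    induction T using Finset.induction_on with
    | empty =>
      have : mix ∅ = y := by funext i; simp [hmix]
      rw [this]; simp
    | @insert a T haT ih =>
      by_cases hxy : x a = y a
      · have hsame : mix (insert a T) = mix T := by
          funext i
          simp only [hmix, Finset.mem_insert]
          by_cases hiT : i ∈ T
          · simp [hiT]
          · by_cases hia : i = a
            · subst hia; simp [hiT, hxy]
            · simp [hia, hiT]
        have hfilt : (insert a T).filter (fun i => x i ≠ y i) =
            T.filter (fun i => x i ≠ y i) := by
          rw [Finset.filter_insert, if_neg (by simpa using hxy)]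
        rw [hsame, hfilt]
        exact ih
      · have hdiff : ∀ w, w ≠ a → mix (insert a T) w = mix T w := by
          intro w hw
          simp only [hmix, Finset.mem_insert]
          simp [hw]
        have hstep : (H (mix (insert a T)) (mix (insert a T))).re -
            (H (mix T) (mix T)).re ≤ r :=
          flip_bound c hc F hF a _ _ hdiff
        have hfilt : (insert a T).filter (fun i => x i ≠ y i) =
            insert a (T.filter (fun i => x i ≠ y i)) := by
          rw [Finset.filter_insert, if_pos (by simpa using hxy)]
        rw [hfilt, Finset.card_insert_of_notMem (fun h => haT (Finset.mem_of_mem_filter a h))]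
        push_cast
        linarith
  have hx : mix Finset.univ = x := by funext i; simp [hmix]
  have := key Finset.univ
  rw [hx] at this
  simpa using this

lemma localSet_nonneg (c : ℕ → ℝ) (hc : ∀ Λ : Finset ι, Λ.Nonempty → 1 ≤ c Λ.card)
    (F : Finset ι → QMat ι) :
    0 ≤ 2 * ⨆ x : ι, ∑ Λ ∈ Finset.univ.filter (fun Λ : Finset ι => x ∈ Λ),
      c Λ.card * opNorm (F Λ) := by
  apply mul_nonneg (by norm_num)
  apply Real.iSup_nonneg
  intro x
  apply Finset.sum_nonneg
  intro Λ hΛ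
  have hx : x ∈ Λ := (Finset.mem_filter.mp hΛ).2
  have := hc Λ ⟨x, hx⟩
  exact mul_nonneg (by linarith) (opNorm_nonneg _)

lemma trace_delta (x y : ι → Fin 2) (H : QMat ι) :
    ((Matrix.single x x 1 - Matrix.single y y 1) * H).trace
      = H x x - H y y := by
  rw [Matrix.sub_mul, Matrix.trace_sub]
  congr 1 <;>
  · simp [Matrix.trace, Matrix.diag, Matrix.mul_apply, Matrix.single, ite_and,
      Finset.sum_ite_eq, Finset.sum_ite_eq']

lemma upper_bound (c : ℕ → ℝ) (hc : ∀ Λ : Finset ι, Λ.Nonempty → 1 ≤ c Λ.card)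
    (x y : ι → Fin 2) (H : QMat ι) (hH : H.IsHermitian) (hloc : localNorm c H ≤ 1) :
    (H x x).re - (H y y).re ≤ ((Finset.univ.filter fun i => x i ≠ y i).card : ℝ) := by
  set lset := { r : ℝ | ∃ F : Finset ι → QMat ι, (∀ Λ, ActsOn Λ (F Λ)) ∧ H = ∑ Λ, F Λ ∧
    r = 2 * ⨆ x : ι, ∑ Λ ∈ Finset.univ.filter (fun Λ : Finset ι => x ∈ Λ),
      c Λ.card * opNorm (F Λ) } with hlset
  have hne : lset.Nonempty := by
    set M : Matrix ({w // w ∈ (Finset.univ : Finset ι)} → Fin 2)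
        ({w // w ∈ (Finset.univ : Finset ι)} → Fin 2) ℂ :=
      fun f g => H (fun i => f ⟨i, Finset.mem_univ i⟩) (fun i => g ⟨i, Finset.mem_univ i⟩)
      with hM
    have hMh : M.IsHermitian := by
      unfold Matrix.IsHermitian
      funext f g
      simp only [Matrix.conjTranspose_apply, hM]
      exact congrFun (congrFun hH _) _
    have hHe : H = embed Finset.univ M := by
      funext f g
      rw [embed]
      rw [if_pos (fun w hw => absurd (Finset.mem_univ w) hw)]
    set F : Finset ι → QMat ι := fun Λ => if Λ = Finset.univ then H else 0 with hF
    refine ⟨_, F, ?_, ?_, rfl⟩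
    · intro Λ
      by_cases h : Λ = Finset.univ
      · subst h
        simp only [hF, if_pos rfl]
        exact ⟨M, hMh, hHe⟩
      · simp only [hF, if_neg h]
        exact actsOn_zero Λ
    · simp [hF, Finset.sum_ite_eq']
  have hkey : ∀ r ∈ lset, (H x x).re - (H y y).re ≤
      ((Finset.univ.filter fun i => x i ≠ y i).card : ℝ) * r := by
    rintro r ⟨F, hF, hsum, rfl⟩
    rw [hsum]
    exact telescope_bound c hc F hF x y
  set D := (H x x).re - (H y y).re with hD
  set N := ((Finset.univ.filter fun i => x i ≠ y i).card : ℝ) with hN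
  have hN0 : 0 ≤ N := by positivity
  have hloc' : sInf lset ≤ 1 := hloc
  apply le_of_forall_pos_le_add
  intro ε hε
  by_cases hNz : N = 0
  · obtain ⟨r, hr⟩ := hne
    have := hkey r hr
    rw [hNz] at this ⊢
    linarith
  · have hNpos : 0 < N := lt_of_le_of_ne hN0 (Ne.symm hNz)
    obtain ⟨r, hrmem, hrlt⟩ := Real.lt_sInf_add_pos hne (div_pos hε hNpos)
    have h1 : r < 1 + ε / N := lt_of_lt_of_le hrlt (by linarith)
    have h2 := hkey r hrmem
    have : N * r ≤ N * (1 + ε / N) := by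
      apply mul_le_mul_of_nonneg_left (le_of_lt h1) hN0
    rw [mul_add, mul_div_cancel₀ _ hNz, mul_one] at this
    linarith

end QW1

/-- The local quantum `W₁` norm recovers the Hamming distance on the states
of the computational basis: `‖|x⟩⟨x| − |y⟩⟨y|‖_{W₁loc} = |{i : xᵢ ≠ yᵢ}|`. -/
theorem stmt7 {n : ℕ} (c : ℕ → ℝ) (hc1 : c 1 = 1)
    (hcmono : ∀ k l, 1 ≤ k → k ≤ l → l ≤ n → c k ≤ c l)
    (x y : Fin n → Fin 2) :
    W1loc c (Matrix.single x x 1 - Matrix.single y y 1) =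
      ((Finset.univ.filter fun i => x i ≠ y i).card : ℝ) := by
  classical
  have hc : ∀ Λ : Finset (Fin n), Λ.Nonempty → 1 ≤ c Λ.card := by
    rintro Λ ⟨a, ha⟩
    have h1 : 1 ≤ Λ.card := Finset.card_pos.mpr ⟨a, ha⟩
    have h2 : Λ.card ≤ n := by simpa using Finset.card_le_univ Λ
    calc (1 : ℝ) = c 1 := hc1.symm
      _ ≤ c Λ.card := hcmono 1 Λ.card le_rfl h1 h2
  set S := Finset.univ.filter fun i => x i ≠ y i with hS
  set MM : (Λ : Finset (Fin n)) →
      Matrix ({w // w ∈ Λ} → Fin 2) ({w // w ∈ Λ} → Fin 2) ℂ :=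
    fun Λ => Matrix.diagonal (fun f =>
      ((if (∀ j : {w // w ∈ Λ}, f j = x j.1) then (1 : ℂ) else 0)
        - (if (∀ j : {w // w ∈ Λ}, f j = y j.1) then (1 : ℂ) else 0)) / 2) with hMM
  have hMMherm : ∀ Λ : Finset (Fin n), (MM Λ).IsHermitian := by
    intro Λ
    rw [hMM, Matrix.isHermitian_diagonal_iff]
    intro f
    split_ifs <;> simp [_root_.IsSelfAdjoint]
  set H₀ : QMat (Fin n) := ∑ i ∈ S, embed {i} (MM {i}) with hH₀
  have hH₀herm : H₀.IsHermitian :=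
    isHermitian_sum_embed (fun i _ => isHermitian_embed (hMMherm {i}))
  set F : Finset (Fin n) → QMat (Fin n) := fun Λ =>
    if Λ ∈ S.image (fun i => ({i} : Finset (Fin n))) then embed Λ (MM Λ) else 0 with hF
  have hFacts : ∀ Λ, ActsOn Λ (F Λ) := by
    intro Λ
    by_cases h : Λ ∈ S.image (fun i => ({i} : Finset (Fin n)))
    · simp only [hF, if_pos h]
      exact ⟨MM Λ, hMMherm Λ, rfl⟩
    · simp only [hF, if_neg h]
      exact actsOn_zero Λ
  have hFsum : H₀ = ∑ Λ, F Λ := by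
    rw [hH₀, hF]
    rw [Finset.sum_ite_mem, Finset.univ_inter,
      Finset.sum_image (fun i _ j _ h => Finset.singleton_injective h)]
  have hFop : ∀ Λ, opNorm (F Λ) ≤ 1 / 2 := by
    intro Λ
    by_cases h : Λ ∈ S.image (fun i => ({i} : Finset (Fin n)))
    · simp only [hF, if_pos h]
      rw [hMM, embed_diagonal]
      apply opNorm_diagonal_le _ _ (by norm_num)
      intro f
      split_ifs <;> norm_num
    · simp only [hF, if_neg h]
      rw [opNorm_zero]
      norm_num
  have hloc : localNorm c H₀ ≤ 1 := by
    have hmem : (2 * ⨆ z : Fin n, ∑ Λ ∈ Finset.univ.filter (fun Λ : Finset (Fin n) => z ∈ Λ),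
        c Λ.card * opNorm (F Λ)) ∈
        { r : ℝ | ∃ F' : Finset (Fin n) → QMat (Fin n), (∀ Λ, ActsOn Λ (F' Λ)) ∧
          H₀ = ∑ Λ, F' Λ ∧
          r = 2 * ⨆ z : Fin n, ∑ Λ ∈ Finset.univ.filter (fun Λ : Finset (Fin n) => z ∈ Λ),
            c Λ.card * opNorm (F' Λ) } := ⟨F, hFacts, hFsum, rfl⟩
    have hbdd : BddBelow { r : ℝ | ∃ F' : Finset (Fin n) → QMat (Fin n),
        (∀ Λ, ActsOn Λ (F' Λ)) ∧ H₀ = ∑ Λ, F' Λ ∧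
        r = 2 * ⨆ z : Fin n, ∑ Λ ∈ Finset.univ.filter (fun Λ : Finset (Fin n) => z ∈ Λ),
          c Λ.card * opNorm (F' Λ) } := by
      refine ⟨0, ?_⟩
      rintro r ⟨F', _, _, rfl⟩
      exact localSet_nonneg c hc F'
    have hle := csInf_le hbdd hmem
    refine le_trans hle ?_
    have hsup : (⨆ z : Fin n, ∑ Λ ∈ Finset.univ.filter (fun Λ : Finset (Fin n) => z ∈ Λ),
        c Λ.card * opNorm (F Λ)) ≤ 1 / 2 := by
      apply Real.iSup_le _ (by norm_num)
      intro z
      have heq : ∑ Λ ∈ Finset.univ.filter (fun Λ : Finset (Fin n) => z ∈ Λ),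
          c Λ.card * opNorm (F Λ) = c ({z} : Finset (Fin n)).card * opNorm (F {z}) := by
        apply Finset.sum_eq_single_of_mem ({z} : Finset (Fin n)) (by simp)
        intro b hb hbz
        have hzb : z ∈ b := (Finset.mem_filter.mp hb).2
        have hFb : F b = 0 := by
          simp only [hF]
          rw [if_neg]
          intro hmem'
          obtain ⟨i, _, hbi⟩ := Finset.mem_image.mp hmem'
          apply hbz
          rw [← hbi] at hzb ⊢
          rw [Finset.mem_singleton] at hzb
          rw [hzb]
        rw [hFb, opNorm_zero, mul_zero]
      rw [heq]
      have hcard : c ({z} : Finset (Fin n)).card = 1 := by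
        rw [Finset.card_singleton, hc1]
      rw [hcard, one_mul]
      exact hFop _
    linarith
  have hxx : H₀ x x = (S.card : ℂ) / 2 := by
    rw [hH₀, Matrix.sum_apply]
    have hterm : ∀ i ∈ S, embed ({i} : Finset (Fin n)) (MM {i}) x x = 1 / 2 := by
      intro i hi
      have hne2 : ¬ ∀ j : {w // w ∈ ({i} : Finset (Fin n))}, x j.1 = y j.1 := fun hcon =>
        (Finset.mem_filter.mp hi).2 (hcon ⟨i, Finset.mem_singleton_self i⟩)
      rw [embed_diag_apply]
      simp only [hMM, Matrix.diagonal_apply_eq]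
      rw [if_neg hne2]
      simp
    rw [Finset.sum_congr rfl hterm, Finset.sum_const, nsmul_eq_mul]
    ring
  have hyy : H₀ y y = -((S.card : ℂ) / 2) := by
    rw [hH₀, Matrix.sum_apply]
    have hterm : ∀ i ∈ S, embed ({i} : Finset (Fin n)) (MM {i}) y y = -(1 / 2) := by
      intro i hi
      have hne2 : ¬ ∀ j : {w // w ∈ ({i} : Finset (Fin n))}, y j.1 = x j.1 := fun hcon =>
        (Finset.mem_filter.mp hi).2 ((hcon ⟨i, Finset.mem_singleton_self i⟩)).symm
      rw [embed_diag_apply]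
      simp only [hMM, Matrix.diagonal_apply_eq]
      rw [if_neg hne2]
      simp
      norm_num
    rw [Finset.sum_congr rfl hterm, Finset.sum_const, nsmul_eq_mul]
    ring
  have htr : (((Matrix.single x x 1 - Matrix.single y y 1) * H₀).trace).re
      = (S.card : ℝ) := by
    rw [trace_delta, hxx, hyy]
    have : (S.card : ℂ) / 2 - -((S.card : ℂ) / 2) = (S.card : ℂ) := by ring
    rw [this]
    simp
  have hub : ∀ r ∈ { r : ℝ | ∃ H : QMat (Fin n), H.IsHermitian ∧ localNorm c H ≤ 1 ∧
      r = (((Matrix.single x x 1 - Matrix.single y y 1) * H).trace).re },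
      r ≤ (S.card : ℝ) := by
    rintro r ⟨H, hHh, hHl, rfl⟩
    rw [trace_delta, Complex.sub_re]
    exact upper_bound c hc x y H hHh hHl
  have hmemT : (S.card : ℝ) ∈ { r : ℝ | ∃ H : QMat (Fin n), H.IsHermitian ∧
      localNorm c H ≤ 1 ∧
      r = (((Matrix.single x x 1 - Matrix.single y y 1) * H).trace).re } :=
    ⟨H₀, hH₀herm, hloc, htr.symm⟩
  exact le_antisymm (csSup_le ⟨_, hmemT⟩ hub) (le_csSup ⟨_, fun r hr => hub r hr⟩ hmemT)
end
end
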